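/- The separation property for distributed bisimilarity in microCCS with choice: if P = ∏ᵢ∈I Sᵢ and Q = ∏ⱼ∈J S'ⱼ are parallel products of sum terms none of which is distributedly bisimilar to 0, and P is distributedly bisimilar to Q, then there exists a bijection f : I → J with Sᵢ distributedly bisimilar to S'_{f(i)} for all i ∈ I. -/

import Mathlib

/-- CCS visible actions: a name `a` or a coname `ā`. -/
inductive Act where
  | inp : ℕ → Act
  | out : ℕ → Act
deriving DecidableEq

/-- The coaction. -/
def Act.co : Act → Act
  | .inp a => .out a
  | .out a => .inp a

/-- Transition labels. -/
inductive Lab where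
  | act : Act → Lab
  | tau : Lab
deriving DecidableEq

mutual
/-- Guarded sums of microCCS with choice: S ::= 0 | η.P | S + S. -/
inductive SP where
  | nil : SP
  | pre : Act → PP → SP
  | sum : SP → SP → SP
/-- Processes of microCCS with choice: P ::= S | P ‖ P. -/
inductive PP where
  | ofS : SP → PP
  | par : PP → PP → PP
end

/-- Transitions of sum terms. -/
inductive SStep : SP → Act → PP → Prop where
  | pre (η P) : SStep (.pre η P) η P
  | sumL : SStep S η P → SStep (.sum S S') η P
  | sumR : SStep S' η P → SStep (.sum S S') η P

/-- The standard CCS transition system on microCCS with choice. -/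
inductive PStep : PP → Lab → PP → Prop where
  | ofS {S : SP} {η : Act} {P : PP} : SStep S η P → PStep (.ofS S) (.act η) P
  | syn {P P' Q Q' : PP} {η : Act} :
      PStep P (.act η) P' → PStep Q (.act η.co) Q' →
      PStep (.par P Q) .tau (.par P' Q')
  | parL (Q) : PStep P μ P' → PStep (.par P Q) μ (.par P' Q)
  | parR (P) : PStep Q μ Q' → PStep (.par P Q) μ (.par P Q')

/-- A (symmetric) strong bisimulation on microCCS with choice. -/
def IsPBisim (R : PP → PP → Prop) : Prop :=
  (∀ P Q, R P Q → R Q P) ∧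
  ∀ P Q μ P', R P Q → PStep P μ P' → ∃ Q', PStep Q μ Q' ∧ R P' Q'

/-- Strong bisimilarity on microCCS with choice. -/
def PBisim (P Q : PP) : Prop := ∃ R, IsPBisim R ∧ R P Q

/-- Distributed transitions `P --μ-->_d ⟨P₁, P₂⟩`, with local residual `P₁`
    and concurrent residual `P₂`. -/
inductive DStep : PP → Lab → PP → PP → Prop where
  | ofS {S : SP} {η : Act} {P : PP} :
      SStep S η P → DStep (.ofS S) (.act η) P (.ofS .nil)
  | parL {P P₁ P₂ : PP} {μ : Lab} (P' : PP) :
      DStep P μ P₁ P₂ → DStep (.par P P') μ P₁ (.par P₂ P')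
  | parR {P' P₁ P₂ : PP} {μ : Lab} (P : PP) :
      DStep P' μ P₁ P₂ → DStep (.par P P') μ P₁ (.par P P₂)
  | syn {P Q P₁ P₂ Q₁ Q₂ : PP} {η : Act} :
      DStep P (.act η) P₁ P₂ → DStep Q (.act η.co) Q₁ Q₂ →
      DStep (.par P Q) .tau (.par P₁ Q₁) (.par P₂ Q₂)

/-- A (symmetric) distributed bisimulation. -/
def IsDBisim (R : PP → PP → Prop) : Prop :=
  (∀ P Q, R P Q → R Q P) ∧
  ∀ P Q μ P₁ P₂, R P Q → DStep P μ P₁ P₂ →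
    ∃ Q₁ Q₂, DStep Q μ Q₁ Q₂ ∧ R P₁ Q₁ ∧ R P₂ Q₂

/-- Distributed bisimilarity. -/
def DBisim (P Q : PP) : Prop := ∃ R, IsDBisim R ∧ R P Q

/-- The parallel product of a list of sum terms. -/
def prodS (l : List SP) : PP := (l.map PP.ofS).foldr PP.par (.ofS .nil)



theorem DBisim.refl (P : PP) : DBisim P P :=
  ⟨Eq, ⟨fun _ _ h => h.symm, fun P Q μ P₁ P₂ h hs => h ▸ ⟨P₁, P₂, hs, rfl, rfl⟩⟩, rfl⟩

theorem DBisim.symm {P Q : PP} (h : DBisim P Q) : DBisim Q P := by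
  obtain ⟨R, ⟨hsym, hstep⟩, hR⟩ := h
  exact ⟨R, ⟨hsym, hstep⟩, hsym _ _ hR⟩

theorem DBisim.trans {P Q R : PP} (h₁ : DBisim P Q) (h₂ : DBisim Q R) : DBisim P R := by
  obtain ⟨R₁, hR₁, h₁⟩ := h₁
  obtain ⟨R₂, hR₂, h₂⟩ := h₂
  refine ⟨fun X Z => ∃ Y, (R₁ X Y ∧ R₂ Y Z) ∨ (R₂ X Y ∧ R₁ Y Z), ⟨?_, ?_⟩, Q, Or.inl ⟨h₁, h₂⟩⟩
  · rintro X Z ⟨Y, ⟨hxy, hyz⟩ | ⟨hxy, hyz⟩⟩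
    · exact ⟨Y, Or.inr ⟨hR₂.1 _ _ hyz, hR₁.1 _ _ hxy⟩⟩
    · exact ⟨Y, Or.inl ⟨hR₁.1 _ _ hyz, hR₂.1 _ _ hxy⟩⟩
  · rintro X Z μ P₁ P₂ ⟨Y, ⟨hxy, hyz⟩ | ⟨hxy, hyz⟩⟩ hs
    · obtain ⟨Y₁, Y₂, hs', hY₁, hY₂⟩ := hR₁.2 _ _ _ _ _ hxy hs
      obtain ⟨Z₁, Z₂, hs'', hZ₁, hZ₂⟩ := hR₂.2 _ _ _ _ _ hyz hs'
      exact ⟨Z₁, Z₂, hs'', ⟨Y₁, Or.inl ⟨hY₁, hZ₁⟩⟩, ⟨Y₂, Or.inl ⟨hY₂, hZ₂⟩⟩⟩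
    · obtain ⟨Y₁, Y₂, hs', hY₁, hY₂⟩ := hR₂.2 _ _ _ _ _ hxy hs
      obtain ⟨Z₁, Z₂, hs'', hZ₁, hZ₂⟩ := hR₁.2 _ _ _ _ _ hyz hs'
      exact ⟨Z₁, Z₂, hs'', ⟨Y₁, Or.inr ⟨hY₁, hZ₁⟩⟩, ⟨Y₂, Or.inr ⟨hY₂, hZ₂⟩⟩⟩

theorem nil_no_dstep : ¬ DStep (.ofS .nil) μ P₁ P₂ := by
  rintro (⟨h⟩); cases h

theorem dbisim_nil_iff {P : PP} :
    DBisim P (.ofS .nil) ↔ ∀ μ P₁ P₂, ¬ DStep P μ P₁ P₂ := by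
  constructor
  · rintro ⟨R, ⟨hsym, hstep⟩, hR⟩ μ P₁ P₂ hs
    obtain ⟨Q₁, Q₂, hs', -⟩ := hstep _ _ _ _ _ hR hs
    exact nil_no_dstep hs'
  · intro h
    refine ⟨fun X Y => (∀ μ P₁ P₂, ¬ DStep X μ P₁ P₂) ∧ (∀ μ P₁ P₂, ¬ DStep Y μ P₁ P₂),
      ⟨fun _ _ h => ⟨h.2, h.1⟩, ?_⟩, h, fun μ P₁ P₂ => nil_no_dstep⟩
    rintro X Y μ P₁ P₂ ⟨hX, -⟩ hs
    exact absurd hs (hX _ _ _)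

theorem exists_sstep_of_not_nil {S : SP} (h : ¬ DBisim (.ofS S) (.ofS .nil)) :
    ∃ η P, SStep S η P := by
  by_contra hc
  push_neg at hc
  exact h (dbisim_nil_iff.mpr (by rintro μ P₁ P₂ (⟨hs⟩); exact hc _ _ hs))


/-- Right-argument congruence of DBisim for par. -/
theorem DBisim.parCongR {A B B' : PP} (h : DBisim B B') :
    DBisim (.par A B) (.par A B') := by
  refine ⟨fun X Y => (∃ A B B', X = .par A B ∧ Y = .par A B' ∧ DBisim B B') ∨ DBisim X Y,
    ⟨?_, ?_⟩, Or.inl ⟨A, B, B', rfl, rfl, h⟩⟩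
  · rintro X Y (⟨A, B, B', rfl, rfl, h⟩ | h)
    · exact Or.inl ⟨A, B', B, rfl, rfl, h.symm⟩
    · exact Or.inr h.symm
  · rintro X Y μ P₁ P₂ (⟨A, B, B', rfl, rfl, hBB⟩ | ⟨R, hR, hxy⟩) hs
    · cases hs with
      | parL P' hA =>
        exact ⟨_, _, DStep.parL _ hA, Or.inr (DBisim.refl _),
          Or.inl ⟨_, _, _, rfl, rfl, hBB⟩⟩
      | parR P hB =>
        obtain ⟨RB, hRB, hB0⟩ := hBB
        obtain ⟨Q₁, Q₂, hs', h₁, h₂⟩ := hRB.2 _ _ _ _ _ hB0 hB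
        exact ⟨_, _, DStep.parR _ hs', Or.inr ⟨RB, hRB, h₁⟩,
          Or.inl ⟨_, _, _, rfl, rfl, ⟨RB, hRB, h₂⟩⟩⟩
      | syn hA hB =>
        obtain ⟨RB, hRB, hB0⟩ := hBB
        obtain ⟨Q₁, Q₂, hs', h₁, h₂⟩ := hRB.2 _ _ _ _ _ hB0 hB
        exact ⟨_, _, DStep.syn hA hs',
          Or.inl ⟨_, _, _, rfl, rfl, ⟨RB, hRB, h₁⟩⟩,
          Or.inl ⟨_, _, _, rfl, rfl, ⟨RB, hRB, h₂⟩⟩⟩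
    · obtain ⟨Q₁, Q₂, hs', h₁, h₂⟩ := hR.2 _ _ _ _ _ hxy hs
      exact ⟨Q₁, Q₂, hs', Or.inr ⟨R, hR, h₁⟩, Or.inr ⟨R, hR, h₂⟩⟩

/-- The unit law: nil ‖ P is bisimilar to P. -/
theorem nil_par_bisim (P : PP) : DBisim (.par (.ofS .nil) P) P := by
  refine ⟨fun X Y => X = .par (.ofS .nil) Y ∨ Y = .par (.ofS .nil) X ∨ X = Y,
    ⟨?_, ?_⟩, Or.inl rfl⟩
  · rintro X Y (rfl | rfl | rfl)
    · exact Or.inr (Or.inl rfl)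
    · exact Or.inl rfl
    · exact Or.inr (Or.inr rfl)
  · rintro X Y μ P₁ P₂ (rfl | rfl | rfl) hs
    · cases hs with
      | parL P' hA => exact absurd hA nil_no_dstep
      | parR P hB =>
        exact ⟨_, _, hB, Or.inr (Or.inr rfl), Or.inl rfl⟩
      | syn hA hB => exact absurd hA nil_no_dstep
    · exact ⟨_, .par (.ofS .nil) P₂, DStep.parR _ hs, Or.inr (Or.inr rfl),
        Or.inr (Or.inl rfl)⟩
    · exact ⟨_, _, hs, Or.inr (Or.inr rfl), Or.inr (Or.inr rfl)⟩

theorem prodS_cons (S : SP) (l : List SP) :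
    prodS (S :: l) = .par (.ofS S) (prodS l) := rfl

/-- Forward characterization of visible distributed steps of a product of sums. -/
theorem dstep_prodS (l : List SP) : ∀ {η : Act} {P₁ P₂ : PP},
    DStep (prodS l) (.act η) P₁ P₂ →
      ∃ j : Fin l.length, SStep (l.get j) η P₁ ∧ P₂ = prodS (l.set j .nil) := by
  induction l with
  | nil =>
    intro η P₁ P₂ h
    exact absurd h nil_no_dstep
  | cons S t ih =>
    intro η P₁ P₂ h
    rw [prodS_cons] at h
    cases h with
    | parL P' hA =>
      obtain ⟨hS⟩ := hA
      exact ⟨⟨0, Nat.succ_pos _⟩, hS, rfl⟩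
    | parR P hB =>
      obtain ⟨j, hS, rfl⟩ := ih hB
      exact ⟨j.succ, hS, rfl⟩

/-- Backward: each component step gives a distributed step of the product. -/
theorem dstep_prodS_of (l : List SP) : ∀ {η : Act} {P₁ : PP} (j : Fin l.length),
    SStep (l.get j) η P₁ →
      DStep (prodS l) (.act η) P₁ (prodS (l.set j .nil)) := by
  induction l with
  | nil => exact fun j => absurd j.isLt (Nat.not_lt_zero _)
  | cons S t ih =>
    rintro η P₁ ⟨j, hj⟩ hS
    cases j with
    | zero => exact DStep.parL _ (DStep.ofS hS)
    | succ j =>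
      exact DStep.parR _ (ih ⟨j, Nat.lt_of_succ_lt_succ hj⟩ hS)

/-- Setting a component to nil is bisimilar to erasing it. -/
theorem set_nil_bisim_eraseIdx (l : List SP) (j : ℕ) :
    DBisim (prodS (l.set j .nil)) (prodS (l.eraseIdx j)) := by
  induction l generalizing j with
  | nil => exact DBisim.refl _
  | cons S t ih =>
    cases j with
    | zero =>
      simpa [prodS_cons] using nil_par_bisim (prodS t)
    | succ j =>
      simpa [prodS_cons] using DBisim.parCongR (ih j)
/-- Matching lemma for products. -/
theorem match_step {l₁ l₂ : List SP} (h : DBisim (prodS l₁) (prodS l₂))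
    {η : Act} {P : PP} (i : Fin l₁.length) (hS : SStep (l₁.get i) η P) :
    ∃ (j : Fin l₂.length) (P' : PP), SStep (l₂.get j) η P' ∧ DBisim P P' ∧
      DBisim (prodS (l₁.eraseIdx i)) (prodS (l₂.eraseIdx j)) := by
  obtain ⟨R, hR, h0⟩ := h
  obtain ⟨Q₁, Q₂, hs', hq₁, hq₂⟩ := hR.2 _ _ _ _ _ h0 (dstep_prodS_of l₁ i hS)
  obtain ⟨j, hS', rfl⟩ := dstep_prodS l₂ hs'
  refine ⟨j, Q₁, hS', ⟨R, hR, hq₁⟩, ?_⟩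
  exact ((set_nil_bisim_eraseIdx l₁ i).symm.trans ⟨R, hR, hq₂⟩).trans
    (set_nil_bisim_eraseIdx l₂ j)

/-- Bisimilar sum terms match each other's steps. -/
theorem sum_bisim_step {A B : SP} (h : DBisim (.ofS A) (.ofS B)) {η : Act} {P : PP}
    (hS : SStep A η P) : ∃ P', SStep B η P' ∧ DBisim P P' := by
  obtain ⟨R, hR, h0⟩ := h
  obtain ⟨Q₁, Q₂, hs', hq₁, -⟩ := hR.2 _ _ _ _ _ h0 (DStep.ofS hS)
  cases hs' with
  | ofS hB => exact ⟨Q₁, hB, ⟨R, hR, hq₁⟩⟩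

/-- The setoid of distributed bisimilarity on sum terms. -/
def SPSetoid : Setoid SP :=
  ⟨fun A B => DBisim (.ofS A) (.ofS B),
    ⟨fun _ => DBisim.refl _, fun h => h.symm, fun h h' => h.trans h'⟩⟩

/-- The bisimilarity class of a sum term. -/
def qS (A : SP) : Quotient SPSetoid := Quotient.mk SPSetoid A

theorem qS_eq_iff {A B : SP} : qS A = qS B ↔ DBisim (.ofS A) (.ofS B) := by
  constructor
  · exact fun h => Quotient.exact h
  · exact fun h => Quotient.sound h

/-- The multiset of bisimilarity classes of a list of sum terms. -/
def qm (l : List SP) : Multiset (Quotient SPSetoid) := (l.map qS : List _)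

theorem qm_eq_of_bij {l₁ l₂ : List SP}
    (e : Fin l₁.length ≃ Fin l₂.length)
    (he : ∀ i, DBisim (.ofS (l₁.get i)) (.ofS (l₂.get (e i)))) : qm l₁ = qm l₂ := by
  have key : ∀ (l : List SP), qm l = Finset.univ.val.map (fun i => qS (l.get i)) := by
    intro l
    have hl : l.map qS = List.ofFn (fun i => qS (l.get i)) := by
      conv_lhs => rw [← List.ofFn_get l, List.map_ofFn]
      rfl
    unfold qm
    rw [Fin.univ_val_map, hl]
  rw [key, key]
  have : (fun i => qS (l₁.get i)) = (fun j => qS (l₂.get j)) ∘ e := by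
    funext i
    exact qS_eq_iff.mpr (he i)
  rw [this, ← Multiset.map_map, Multiset.map_univ_val_equiv]

theorem perm_get_cons_eraseIdx :
    ∀ (l : List SP) (j : Fin l.length), l.Perm (l.get j :: l.eraseIdx j) := by
  intro l
  induction l with
  | nil => exact fun j => absurd j.isLt (Nat.not_lt_zero _)
  | cons a t ih =>
    rintro ⟨j, hj⟩
    cases j with
    | zero => exact List.Perm.refl _
    | succ j =>
      have h1 := (ih ⟨j, Nat.lt_of_succ_lt_succ hj⟩).cons a
      exact h1.trans (List.Perm.swap _ _ _)

theorem qm_erase (l : List SP) (j : Fin l.length) :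
    qm l = qS (l.get j) ::ₘ qm (l.eraseIdx j) := by
  have := (perm_get_cons_eraseIdx l j).map qS
  exact Multiset.coe_eq_coe.mpr this

theorem class_eq_of_qm_erase_eq {l : List SP} {j j' : Fin l.length}
    (h : qm (l.eraseIdx j) = qm (l.eraseIdx j')) : qS (l.get j) = qS (l.get j') := by
  have h1 := (qm_erase l j).symm.trans (qm_erase l j')
  rw [h] at h1
  exact (Multiset.cons_inj_left _).mp h1

theorem get_eraseIdx_eq (l : List SP) (j : Fin l.length)
    (hm : l.length = (l.eraseIdx j).length + 1) (k : Fin (l.eraseIdx j).length) :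
    (l.eraseIdx j).get k = l.get (Fin.cast hm.symm ((Fin.cast hm j).succAbove k)) := by
  have hg : ∀ (a b : ℕ) (ha : a < l.length) (hb : b < l.length), a = b → l[a]'ha = l[b]'hb := by
    rintro a b ha hb rfl; rfl
  have hv : ((Fin.cast hm.symm ((Fin.cast hm j).succAbove k)) : ℕ)
      = if (k : ℕ) < (j : ℕ) then (k : ℕ) else (k : ℕ) + 1 := by
    simp only [Fin.succAbove]
    by_cases h : (k : ℕ) < (j : ℕ)
    · simp [Fin.lt_def, h]
    · simp [Fin.lt_def, h]
  simp only [List.get_eq_getElem, List.getElem_eraseIdx]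
  split
  · next h => exact hg _ _ _ _ (by rw [hv, if_pos h])
  · next h => exact hg _ _ _ _ (by rw [hv, if_neg h])
theorem extend_equiv {n m : ℕ} (j₀ : Fin (m + 1)) (e' : Fin n ≃ Fin m) :
    ∃ e : Fin (n + 1) ≃ Fin (m + 1),
      e 0 = j₀ ∧ ∀ k : Fin n, e k.succ = j₀.succAbove (e' k) := by
  refine ⟨(finSuccEquiv n).trans ((e'.optionCongr).trans (finSuccEquiv' j₀).symm), ?_, ?_⟩
  · simp [finSuccEquiv_zero, finSuccEquiv'_symm_none]
  · intro k
    simp [finSuccEquiv_succ, finSuccEquiv'_symm_some]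

theorem sep_nil_case {l₂ : List SP}
    (h₂ : ∀ S ∈ l₂, ¬ DBisim (.ofS S) (.ofS .nil))
    (h : DBisim (prodS ([] : List SP)) (prodS l₂)) :
    ∃ e : Fin (List.length ([] : List SP)) ≃ Fin l₂.length,
      ∀ i, DBisim (.ofS (([] : List SP).get i)) (.ofS (l₂.get (e i))) := by
  cases l₂ with
  | nil => exact ⟨Equiv.refl _, fun i => i.elim0⟩
  | cons S' t =>
    exfalso
    obtain ⟨η, P, hS⟩ := exists_sstep_of_not_nil (h₂ S' (List.mem_cons_self))
    have hstep := dstep_prodS_of (S' :: t) ⟨0, Nat.succ_pos _⟩ hS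
    exact dbisim_nil_iff.mp h.symm _ _ _ hstep

theorem main_sep : ∀ (n : ℕ) (l₁ l₂ : List SP), l₁.length ≤ n →
    (∀ S ∈ l₁, ¬ DBisim (.ofS S) (.ofS .nil)) →
    (∀ S ∈ l₂, ¬ DBisim (.ofS S) (.ofS .nil)) →
    DBisim (prodS l₁) (prodS l₂) →
    ∃ e : Fin l₁.length ≃ Fin l₂.length,
      ∀ i, DBisim (.ofS (l₁.get i)) (.ofS (l₂.get (e i))) := by
  intro n
  induction n with
  | zero =>
    intro l₁ l₂ hlen h₁ h₂ h
    have hl₁ : l₁ = [] := List.length_eq_zero_iff.mp (Nat.le_zero.mp hlen)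
    subst hl₁
    exact sep_nil_case h₂ h
  | succ n ih =>
    intro l₁ l₂ hlen h₁ h₂ h
    cases l₁ with
    | nil => exact sep_nil_case h₂ h
    | cons S r₁ =>
      have hlen' : r₁.length ≤ n := Nat.le_of_succ_le_succ hlen
      have hnn1 : ∀ S' ∈ r₁, ¬ DBisim (.ofS S') (.ofS .nil) :=
        fun S' hm => h₁ S' (List.mem_cons_of_mem _ hm)
      -- Fact 1: any step of S is matched by some component of l₂
      have fact1 : ∀ {η : Act} {P : PP}, SStep S η P →
          ∃ (j : Fin l₂.length) (P' : PP), SStep (l₂.get j) η P' ∧ DBisim P P' ∧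
            DBisim (prodS r₁) (prodS (l₂.eraseIdx j)) := by
        intro η P hS
        obtain ⟨j, P', hS', hPP', hbis⟩ :=
          match_step h (⟨0, Nat.succ_pos _⟩ : Fin (S :: r₁).length) hS
        exact ⟨j, P', hS', hPP', hbis⟩
      -- class multiset facts
      have qmFact : ∀ j : Fin l₂.length, DBisim (prodS r₁) (prodS (l₂.eraseIdx j)) →
          qm r₁ = qm (l₂.eraseIdx j) := by
        intro j hb
        obtain ⟨e, he⟩ := ih r₁ (l₂.eraseIdx j) hlen' hnn1
          (fun S' hm => h₂ S' (List.eraseIdx_subset hm)) hb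
        exact qm_eq_of_bij e he
      -- fix a step of S and its matcher j₀
      obtain ⟨η₀, P₀, hS₀⟩ := exists_sstep_of_not_nil (h₁ S (List.mem_cons_self))
      obtain ⟨j₀, P₀', hS₀', hP₀, hbis₀⟩ := fact1 hS₀
      have hqm₀ : qm r₁ = qm (l₂.eraseIdx j₀) := qmFact j₀ hbis₀
      -- Fact 2: any matcher is bisimilar to the fixed one
      have fact2 : ∀ j : Fin l₂.length, DBisim (prodS r₁) (prodS (l₂.eraseIdx j)) →
          DBisim (.ofS (l₂.get j)) (.ofS (l₂.get j₀)) := by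
        intro j hb
        exact qS_eq_iff.mp (class_eq_of_qm_erase_eq ((qmFact j hb).symm.trans hqm₀))
      -- Fact 3: any step of the matcher is matched by S
      have fact3 : ∀ {η : Act} {P : PP}, SStep (l₂.get j₀) η P →
          ∃ P', SStep S η P' ∧ DBisim P P' := by
        intro η P hS
        obtain ⟨i, P', hS', hPP', hbis⟩ := match_step h.symm j₀ hS
        have hleni : ((S :: r₁).eraseIdx i).length ≤ n := by
          have := List.length_eraseIdx_add_one (i.isLt)
          simp only [List.length_cons] at this
          omega
        have h5 : qm ((S :: r₁).eraseIdx i) = qm (l₂.eraseIdx j₀) := by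
          obtain ⟨e, he⟩ := ih ((S :: r₁).eraseIdx i) (l₂.eraseIdx j₀) hleni
            (fun S' hm => h₁ S' (List.eraseIdx_subset hm))
            (fun S' hm => h₂ S' (List.eraseIdx_subset hm)) hbis.symm
          exact qm_eq_of_bij e he
        have hq : qS ((S :: r₁).get i) =
            qS ((S :: r₁).get (⟨0, Nat.succ_pos _⟩ : Fin (S :: r₁).length)) :=
          class_eq_of_qm_erase_eq (h5.trans hqm₀.symm)
        obtain ⟨P'', hS'', hP''⟩ := sum_bisim_step (qS_eq_iff.mp hq) hS'
        exact ⟨P'', hS'', hPP'.trans hP''⟩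
      -- Claim A : S is bisimilar to the fixed matcher
      have claimA : DBisim (.ofS S) (.ofS (l₂.get j₀)) := by
        refine ⟨fun X Y => DBisim X Y ∨ (X = .ofS S ∧ Y = .ofS (l₂.get j₀)) ∨
          (Y = .ofS S ∧ X = .ofS (l₂.get j₀)), ⟨?_, ?_⟩, Or.inr (Or.inl ⟨rfl, rfl⟩)⟩
        · rintro X Y (hD | ⟨rfl, rfl⟩ | ⟨rfl, rfl⟩)
          · exact Or.inl hD.symm
          · exact Or.inr (Or.inr ⟨rfl, rfl⟩)
          · exact Or.inr (Or.inl ⟨rfl, rfl⟩)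
        · rintro X Y μ Q₁ Q₂ (hD | ⟨rfl, rfl⟩ | ⟨rfl, rfl⟩) hs
          · obtain ⟨R, hR, h0⟩ := hD
            obtain ⟨Q₁', Q₂', hs', hq₁, hq₂⟩ := hR.2 _ _ _ _ _ h0 hs
            exact ⟨Q₁', Q₂', hs', Or.inl ⟨R, hR, hq₁⟩, Or.inl ⟨R, hR, hq₂⟩⟩
          · cases hs with
            | ofS hS =>
              obtain ⟨j, P', hS', hPP', hbis⟩ := fact1 hS
              obtain ⟨P'', hS'', hP''⟩ := sum_bisim_step (fact2 j hbis) hS'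
              exact ⟨P'', .ofS .nil, DStep.ofS hS'',
                Or.inl (hPP'.trans hP''), Or.inl (DBisim.refl _)⟩
          · cases hs with
            | ofS hS =>
              obtain ⟨P', hS', hPP'⟩ := fact3 hS
              exact ⟨P', .ofS .nil, DStep.ofS hS', Or.inl hPP', Or.inl (DBisim.refl _)⟩
      -- assemble the bijection
      obtain ⟨e', he'⟩ := ih r₁ (l₂.eraseIdx j₀) hlen' hnn1
        (fun S' hm => h₂ S' (List.eraseIdx_subset hm)) hbis₀
      have hm : l₂.length = (l₂.eraseIdx (j₀ : ℕ)).length + 1 :=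
        (List.length_eraseIdx_add_one j₀.isLt).symm
      obtain ⟨e0, he0, hes⟩ := extend_equiv (Fin.cast hm j₀) e'
      have gtrans : ∀ (jj : Fin l₂.length) (A : SP),
          DBisim (.ofS A) (.ofS (l₂.get jj)) →
          ∀ jj', jj' = jj → DBisim (.ofS A) (.ofS (l₂.get jj')) := by
        rintro jj A hA jj' rfl
        exact hA
      refine ⟨e0.trans (finCongr hm.symm), ?_⟩
      intro i
      refine Fin.cases ?_ ?_ i
      · -- i = 0
        have h0 : (e0.trans (finCongr hm.symm)) 0 = j₀ := by
          rw [Equiv.trans_apply, he0, finCongr_apply]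
          ext
          simp
        exact gtrans j₀ S claimA _ h0
      · -- i = k.succ
        intro k
        have hk : (e0.trans (finCongr hm.symm)) k.succ =
            Fin.cast hm.symm ((Fin.cast hm j₀).succAbove (e' k)) := by
          rw [Equiv.trans_apply, hes k, finCongr_apply]
        have h2 := he' k
        rw [get_eraseIdx_eq l₂ j₀ hm (e' k)] at h2
        exact gtrans _ _ h2 _ hk


/-- separation property for distributed bisimilarity: two
    distributedly bisimilar parallel products of non-null sum terms have
    their components in pairwise distributedly bisimilar one-to-one
    correspondence. -/
theorem separation_property (l₁ l₂ : List SP)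
    (h₁ : ∀ S ∈ l₁, ¬ DBisim (.ofS S) (.ofS .nil))
    (h₂ : ∀ S ∈ l₂, ¬ DBisim (.ofS S) (.ofS .nil))
    (h : DBisim (prodS l₁) (prodS l₂)) :
    ∃ e : Fin l₁.length ≃ Fin l₂.length,
      ∀ i : Fin l₁.length, DBisim (.ofS (l₁.get i)) (.ofS (l₂.get (e i))) := by
  exact main_sep l₁.length l₁ l₂ le_rfl h₁ h₂ h
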